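/- Let M ⊆ 𝔽₂ⁿ \ {0} be a finite nonempty Eulerian set with rank r ≥ 2. Then M contains a circuit of size at least log|M| / log r. -/

import Mathlib

open Finset

/-- A circuit: a minimal nonempty subset of the ambient group minus `{0}` with zero sum. -/
def IsCircuit {V : Type*} [AddCommGroup V] [DecidableEq V] (C : Finset V) : Prop :=
  C.Nonempty ∧ (0 : V) ∉ C ∧ ∑ x ∈ C, x = 0 ∧
    ∀ D ⊆ C, D.Nonempty → ∑ x ∈ D, x = 0 → D = C
/-- rank: maximum size of a linearly independent subset of `M`. -/
noncomputable def rk {n : ℕ} (M : Finset (Fin n → ZMod 2)) : ℕ :=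
  sSup {k : ℕ | ∃ s ⊆ M, s.card = k ∧
    LinearIndependent (ZMod 2) (fun x : s => (x : Fin n → ZMod 2))}

lemma add_self_V {n : ℕ} (x : Fin n → ZMod 2) : x + x = 0 := by
  funext i
  have h : ∀ a : ZMod 2, a + a = 0 := by decide
  exact h (x i)

/-- A nonempty subset of an independent set has nonzero sum. -/
lemma indep_sum_eq_empty {n : ℕ} {B D : Finset (Fin n → ZMod 2)}
    (hB : LinearIndependent (ZMod 2) (fun x : B => (x : Fin n → ZMod 2)))
    (hDB : D ⊆ B) (h0 : ∑ x ∈ D, x = 0) : D = ∅ := by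
  classical
  rw [linearIndependent_iff'] at hB
  by_contra hne
  obtain ⟨a, ha⟩ := Finset.nonempty_iff_ne_empty.mpr hne
  have hsum : ∑ b ∈ B.attach, (if (b : Fin n → ZMod 2) ∈ D then (1 : ZMod 2) else 0) • (b : Fin n → ZMod 2) = 0 := by
    have h1 : ∀ b : {x // x ∈ B},
        (if (b : Fin n → ZMod 2) ∈ D then (1 : ZMod 2) else 0) • (b : Fin n → ZMod 2)
          = if (b : Fin n → ZMod 2) ∈ D then (b : Fin n → ZMod 2) else 0 := by
      intro b; split <;> simp
    rw [Finset.sum_congr rfl (fun b _ => h1 b)]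
    rw [Finset.sum_attach B (fun x => if x ∈ D then x else 0)]
    rw [Finset.sum_ite_mem]
    rw [Finset.inter_eq_right.mpr hDB]
    exact h0
  have key := hB B.attach (fun b => if (b : Fin n → ZMod 2) ∈ D then (1 : ZMod 2) else 0)
    hsum ⟨a, hDB ha⟩ (Finset.mem_attach _ _)
  simp [ha] at key

/-- Subsets of an independent set are determined by their sums. -/
lemma indep_sum_unique {n : ℕ} {B D1 D2 : Finset (Fin n → ZMod 2)}
    (hB : LinearIndependent (ZMod 2) (fun x : B => (x : Fin n → ZMod 2)))
    (h1 : D1 ⊆ B) (h2 : D2 ⊆ B) (heq : ∑ x ∈ D1, x = ∑ x ∈ D2, x) : D1 = D2 := by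
  classical
  have hui : (∑ x ∈ D1 ∪ D2, x) + (∑ x ∈ D1 ∩ D2, x) = 0 := by
    rw [Finset.sum_union_inter, heq]
    exact add_self_V _
  have hii : (∑ x ∈ D1 ∩ D2, x) + (∑ x ∈ D1 ∩ D2, x) = 0 := add_self_V _
  have h0 : ∑ x ∈ (D1 ∪ D2) \ (D1 ∩ D2), x = 0 := by
    rw [Finset.sum_sdiff_eq_sub Finset.inter_subset_union]
    have : (∑ x ∈ D1 ∪ D2, x) - (∑ x ∈ D1 ∩ D2, x)
        = ((∑ x ∈ D1 ∪ D2, x) + (∑ x ∈ D1 ∩ D2, x))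
          - ((∑ x ∈ D1 ∩ D2, x) + (∑ x ∈ D1 ∩ D2, x)) := by ring
    rw [this, hui, hii, sub_zero]
  have hsub : (D1 ∪ D2) \ (D1 ∩ D2) ⊆ B := fun x hx =>
    (Finset.mem_union.mp (Finset.mem_sdiff.mp hx).1).elim (h1 ·) (h2 ·)
  have hempty := indep_sum_eq_empty hB hsub h0
  have hUI : D1 ∪ D2 ⊆ D1 ∩ D2 := Finset.sdiff_eq_empty_iff_subset.mp hempty
  exact Finset.Subset.antisymm
    (fun x hx => Finset.mem_of_mem_inter_right (hUI (Finset.mem_union_left _ hx)))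
    (fun x hx => Finset.mem_of_mem_inter_left (hUI (Finset.mem_union_right _ hx)))

lemma geom_le' {k : ℕ} (hk : 2 ≤ k) : ∀ m, ∑ i ∈ Finset.range m, k ^ i ≤ k ^ m
  | 0 => by simp
  | m + 1 => by
    rw [Finset.sum_range_succ]
    have h1 := geom_le' hk m
    have h2 : k ^ m * 2 ≤ k ^ m * k := Nat.mul_le_mul_left _ hk
    have h3 : k ^ (m + 1) = k ^ m * k := pow_succ k m
    omega

/-- Every nonempty Eulerian binary matroid of rank `r ≥ 2` contains a circuit of
size at least `log |M| / log r`. -/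
theorem exists_circuit_card_ge_log {n : ℕ} (M : Finset (Fin n → ZMod 2))
    (hM : (0 : Fin n → ZMod 2) ∉ M) (hne : M.Nonempty) (heul : ∑ x ∈ M, x = 0)
    (hr : 2 ≤ rk M) :
    ∃ C ⊆ M, IsCircuit C ∧
      Real.log M.card / Real.log (rk M) ≤ (C.card : ℝ) := by
  classical
  set S : Set ℕ := {k : ℕ | ∃ s ⊆ M, s.card = k ∧
    LinearIndependent (ZMod 2) (fun x : s => (x : Fin n → ZMod 2))} with hSdef
  have hrkS : rk M = sSup S := rfl
  have hk2 : 2 ≤ sSup S := hrkS ▸ hr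
  have hSbdd : BddAbove S := by
    refine ⟨M.card, ?_⟩
    rintro m ⟨s, hsM, rfl, -⟩
    exact Finset.card_le_card hsM
  have hSne : S.Nonempty := by
    refine ⟨0, ∅, by simp, by simp, ?_⟩
    rw [linearIndependent_iff']
    rintro s g hg ⟨x, hx⟩ hi
    simp at hx
  obtain ⟨B, hBM, hBcard, hBind⟩ := Nat.sSup_mem hSne hSbdd
  -- every element of M lies in the span of B
  have hspan : ∀ x ∈ M, x ∈ Submodule.span (ZMod 2) (B : Set (Fin n → ZMod 2)) := by
    intro x hx
    by_contra hxs
    have hxB : x ∉ B := fun h => hxs (Submodule.subset_span h)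
    have hset : LinearIndependent (ZMod 2)
        (fun b : (insert x (B : Set (Fin n → ZMod 2)) : Set (Fin n → ZMod 2)) =>
          (b : Fin n → ZMod 2)) := LinearIndepOn.id_insert hBind hxs
    rw [← Finset.coe_insert] at hset
    have hmem : sSup S + 1 ∈ S := by
      refine ⟨insert x B, Finset.insert_subset hx hBM, ?_, hset⟩
      rw [Finset.card_insert_of_notMem hxB, hBcard]
    have := le_csSup hSbdd hmem
    omega
  -- representation as subset sums of B
  have hrep_ex : ∀ x : Fin n → ZMod 2, ∃ A : Finset (Fin n → ZMod 2),
      x ∈ M → (A ⊆ B ∧ ∑ a ∈ A, a = x) := by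
    intro x
    by_cases hx : x ∈ M
    · obtain ⟨f, -, hf⟩ := Submodule.mem_span_finset.mp (hspan x hx)
      refine ⟨B.filter (fun b => f b = 1), fun _ => ⟨Finset.filter_subset _ _, ?_⟩⟩
      rw [Finset.sum_filter, ← hf]
      refine Finset.sum_congr rfl (fun b _ => ?_)
      have h01 : ∀ a : ZMod 2, a = 0 ∨ a = 1 := by decide
      rcases h01 (f b) with h | h <;> simp [h]
    · exact ⟨∅, fun h => absurd h hx⟩
  choose rep hrep using hrep_ex
  set s := M.sup (fun x => (rep x).card) with hsdef
  obtain ⟨x0, hx0M, hx0s⟩ := Finset.exists_mem_eq_sup M hne (fun x => (rep x).card)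
  -- s ≥ 2
  have hs2 : 2 ≤ s := by
    by_contra hcon
    push_neg at hcon
    have hMB : M ⊆ B := by
      intro x hx
      obtain ⟨hA, hsum⟩ := hrep x hx
      have hc : (rep x).card ≤ 1 :=
        le_trans (Finset.le_sup (f := fun x => (rep x).card) hx) (by rw [← hsdef]; omega)
      rcases Nat.lt_or_ge (rep x).card 1 with h1 | h1
      · have hE : rep x = ∅ := Finset.card_eq_zero.mp (by omega)
        rw [hE] at hsum
        simp at hsum
        exact absurd (hsum ▸ hx) hM
      · have hc1 : (rep x).card = 1 := le_antisymm hc h1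
        obtain ⟨b, hb⟩ := Finset.card_eq_one.mp hc1
        rw [hb] at hsum hA
        simp at hsum
        rw [← hsum]
        exact hA (Finset.mem_singleton_self b)
    have := indep_sum_eq_empty hBind hMB heul
    exact absurd this hne.ne_empty
  obtain ⟨hAB, hAsum⟩ := hrep x0 hx0M
  -- x0 is not in its own representation
  have hx0A : x0 ∉ rep x0 := by
    intro hmem
    have h1 : rep x0 = {x0} := by
      refine indep_sum_unique hBind hAB (Finset.singleton_subset_iff.mpr (hAB hmem)) ?_
      rw [hAsum, Finset.sum_singleton]
    have hcard1 : (rep x0).card = 1 := by rw [h1]; simp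
    have hseq : s = (rep x0).card := hx0s
    omega
  set C := insert x0 (rep x0) with hCdef
  have hCM : C ⊆ M := Finset.insert_subset hx0M (hAB.trans hBM)
  have hCcard : C.card = s + 1 := by
    rw [hCdef, Finset.card_insert_of_notMem hx0A, ← hx0s]
  have hCirc : IsCircuit C := by
    refine ⟨Finset.insert_nonempty _ _, ?_, ?_, ?_⟩
    · intro h0
      rcases Finset.mem_insert.mp h0 with h | h
      · exact hM (h ▸ hx0M)
      · exact hM (hBM (hAB h))
    · rw [hCdef, Finset.sum_insert hx0A, hAsum]
      exact add_self_V x0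
    · intro D hDC hDne hD0
      by_cases hx0D : x0 ∈ D
      · have hD' : D.erase x0 ⊆ rep x0 := by
          intro a ha
          rcases Finset.mem_insert.mp (hDC (Finset.mem_of_mem_erase ha)) with h | h
          · exact absurd h (Finset.ne_of_mem_erase ha)
          · exact h
        have hsumD' : ∑ a ∈ D.erase x0, a = x0 := by
          have h1 : x0 + ∑ a ∈ D.erase x0, a = 0 :=
            (Finset.add_sum_erase D (fun a => a) hx0D).trans hD0
          calc ∑ a ∈ D.erase x0, a
              = (x0 + x0) + ∑ a ∈ D.erase x0, a := by rw [add_self_V, zero_add]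
            _ = x0 + (x0 + ∑ a ∈ D.erase x0, a) := by ring
            _ = x0 := by rw [h1, add_zero]
        have hDA : D.erase x0 = rep x0 :=
          indep_sum_unique hBind (hD'.trans hAB) hAB (by rw [hsumD', hAsum])
        rw [← Finset.insert_erase hx0D, hDA]
      · have hDA : D ⊆ rep x0 := fun a ha =>
          (Finset.mem_insert.mp (hDC ha)).resolve_left (fun h => hx0D (h ▸ ha))
        have := indep_sum_eq_empty hBind (hDA.trans hAB) hD0
        exact absurd this hDne.ne_empty
  -- counting
  have hcount : M.card ≤ (sSup S) ^ (s + 1) := by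
    have h1 : M.card ≤ (B.powerset.filter (fun A => A.card ≤ s)).card := by
      refine Finset.card_le_card_of_injOn rep (fun a ha => ?_) (fun a ha b hb hab => ?_)
      · rw [Finset.mem_coe, Finset.mem_filter, Finset.mem_powerset]
        exact ⟨(hrep a ha).1, Finset.le_sup (f := fun x => (rep x).card) ha⟩
      · have ha' := (hrep a ha).2
        have hb' := (hrep b hb).2
        rw [← ha', ← hb', hab]
    have h2 : (B.powerset.filter (fun A => A.card ≤ s)).card
        ≤ ∑ i ∈ Finset.range (s + 1), (sSup S).choose i := by
      calc (B.powerset.filter (fun A => A.card ≤ s)).card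
          ≤ ((Finset.range (s + 1)).biUnion (fun i => B.powersetCard i)).card := by
            refine Finset.card_le_card (fun A hA => ?_)
            rw [Finset.mem_filter, Finset.mem_powerset] at hA
            exact Finset.mem_biUnion.mpr ⟨A.card, Finset.mem_range.mpr (by omega),
              Finset.mem_powersetCard.mpr ⟨hA.1, rfl⟩⟩
        _ ≤ ∑ i ∈ Finset.range (s + 1), (B.powersetCard i).card := Finset.card_biUnion_le
        _ = ∑ i ∈ Finset.range (s + 1), (sSup S).choose i := by
            simp [Finset.card_powersetCard, hBcard]
    have h3 : ∑ i ∈ Finset.range (s + 1), (sSup S).choose i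
        ≤ ∑ i ∈ Finset.range (s + 1), (sSup S) ^ i :=
      Finset.sum_le_sum (fun i _ => Nat.choose_le_pow _ _)
    have h4 := geom_le' hk2 (s + 1)
    omega
  -- conclusion
  refine ⟨C, hCM, hCirc, ?_⟩
  rw [hrkS]
  have hk1 : (1 : ℝ) < ((sSup S : ℕ) : ℝ) := by exact_mod_cast hk2
  have hlogpos : 0 < Real.log ((sSup S : ℕ) : ℝ) := Real.log_pos hk1
  rw [div_le_iff₀ hlogpos]
  have hMpos : (0 : ℝ) < (M.card : ℝ) := by exact_mod_cast hne.card_pos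
  calc Real.log (M.card : ℝ)
      ≤ Real.log (((sSup S) ^ (s + 1) : ℕ) : ℝ) := by
        apply Real.log_le_log hMpos
        exact_mod_cast hcount
    _ = ((s + 1 : ℕ) : ℝ) * Real.log ((sSup S : ℕ) : ℝ) := by
        push_cast
        rw [Real.log_pow]
        push_cast
        ring
    _ ≤ (C.card : ℝ) * Real.log ((sSup S : ℕ) : ℝ) := by
        rw [hCcard]
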